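/- Let L/K be an extension of real-valued fields such that K is dense in L (with respect to the metric induced by the absolute value), and let A → K be a homomorphism from a commutative ring A. Equip Ω_{K/A} and Ω_{L/A} with their Kähler seminorms, and equip Ω_{K/A} ⊗_K L with the tensor seminorm (viewing L as a seminormed K-module via its absolute value). Then the canonical L-linear map ψ : Ω_{K/A} ⊗_K L → Ω_{L/A} is an isometry (‖ψ(x)‖ = ‖x‖ for all x) and has dense image. -/

import Mathlib

open scoped NNReal TensorProduct

section MyHelpers

lemma my_sup_comp_equiv {ι κ : Type*} [Fintype ι] [Fintype κ] (e : ι ≃ κ) (f : κ → ℝ≥0) :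
    Finset.univ.sup (fun i => f (e i)) = Finset.univ.sup f := by
  apply le_antisymm
  · exact Finset.sup_le fun i _ => Finset.le_sup (Finset.mem_univ (e i))
  · exact Finset.sup_le fun j _ => by
      simpa using Finset.le_sup (f := fun i => f (e i)) (Finset.mem_univ (e.symm j))

lemma my_sup_sum_elim {ι κ : Type*} [Fintype ι] [Fintype κ] (f : ι → ℝ≥0) (g : κ → ℝ≥0) :
    Finset.univ.sup (Sum.elim f g) = max (Finset.univ.sup f) (Finset.univ.sup g) := by
  apply le_antisymm
  · refine Finset.sup_le ?_
    rintro (i | j) _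
    · exact le_max_of_le_left (Finset.le_sup (Finset.mem_univ i))
    · exact le_max_of_le_right (Finset.le_sup (Finset.mem_univ j))
  · refine max_le ?_ ?_
    · exact Finset.sup_le fun i _ => Finset.le_sup (f := Sum.elim f g) (Finset.mem_univ (Sum.inl i))
    · exact Finset.sup_le fun j _ => Finset.le_sup (f := Sum.elim f g) (Finset.mem_univ (Sum.inr j))

lemma my_ultra_sum {M : Type*} [AddCommGroup M] (ν : M → ℝ≥0) (h0 : ν 0 = 0)
    (hu : ∀ x y, ν (x + y) ≤ max (ν x) (ν y)) {σ : Type*} (s : Finset σ) (u : σ → M) :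
    ν (∑ i ∈ s, u i) ≤ s.sup fun i => ν (u i) := by
  induction s using Finset.cons_induction with
  | empty => simpa using h0.le
  | cons a s ha ih =>
    rw [Finset.sum_cons, Finset.sup_cons]
    exact (hu _ _).trans (max_le_max le_rfl ih)

lemma my_tendsto_err : Filter.Tendsto (fun n : ℕ => (1 : ℝ≥0) / (n + 1)) Filter.atTop (nhds 0) := by
  rw [← NNReal.tendsto_coe]
  simpa [NNReal.coe_div] using tendsto_one_div_add_atTop_nhds_zero_nat (𝕜 := ℝ)

lemma my_squeeze {f g : ℕ → ℝ≥0} (hle : ∀ n, f n ≤ g n)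
    (hg : Filter.Tendsto g Filter.atTop (nhds 0)) :
    Filter.Tendsto f Filter.atTop (nhds 0) :=
  tendsto_of_tendsto_of_tendsto_of_le_of_le tendsto_const_nhds hg (fun _ => zero_le) hle

lemma my_tendsto_max {f g : ℕ → ℝ≥0} (hf : Filter.Tendsto f Filter.atTop (nhds 0))
    (hg : Filter.Tendsto g Filter.atTop (nhds 0)) :
    Filter.Tendsto (fun n => max (f n) (g n)) Filter.atTop (nhds 0) := by
  simpa using hf.max hg

end MyHelpers

/-- The Kähler seminorm on `Ω[B⁄A]` induced by a seminorm `vB` on `B`: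
`‖x‖ = inf` over all representations `x = ∑ cᵢ • d bᵢ` of `max vB cᵢ * vB bᵢ`. -/
noncomputable def kahlerSeminorm (A B : Type*) [CommRing A] [CommRing B] [Algebra A B]
    (vB : B → ℝ≥0) (x : Ω[B⁄A]) : ℝ≥0 :=
  sInf { r | ∃ (n : ℕ) (c b : Fin n → B),
    x = ∑ i, c i • KaehlerDifferential.D A B (b i) ∧
    r = Finset.univ.sup fun i => vB (c i) * vB (b i) }

section KahlerLemmas
variable {A B : Type*} [CommRing A] [CommRing B] [Algebra A B] (v : Valuation B ℝ≥0)

lemma k_rep_exists (x : Ω[B⁄A]) :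
    ∃ (n : ℕ) (c b : Fin n → B), x = ∑ i, c i • KaehlerDifferential.D A B (b i) := by
  have hx : x ∈ Submodule.span B (Set.range (KaehlerDifferential.D A B)) := by
    rw [KaehlerDifferential.span_range_derivation]; trivial
  induction hx using Submodule.span_induction with
  | mem y hy =>
    obtain ⟨b, rfl⟩ := hy
    exact ⟨1, fun _ => 1, fun _ => b, by simp⟩
  | zero => exact ⟨0, ![], ![], by simp⟩
  | add y z _ _ hy hz =>
    obtain ⟨n₁, c₁, b₁, h₁⟩ := hy
    obtain ⟨n₂, c₂, b₂, h₂⟩ := hz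
    refine ⟨n₁ + n₂, Fin.append c₁ c₂, Fin.append b₁ b₂, ?_⟩
    rw [Fin.sum_univ_add]
    simp [Fin.append_left, Fin.append_right, h₁, h₂]
  | smul a y _ hy =>
    obtain ⟨n, c, b, h⟩ := hy
    exact ⟨n, fun i => a * c i, b, by rw [h, Finset.smul_sum]; simp [smul_smul]⟩

lemma k_le_of_rep {ι : Type*} [Fintype ι] (c b : ι → B) {x : Ω[B⁄A]}
    (hx : x = ∑ i, c i • KaehlerDifferential.D A B (b i)) :
    kahlerSeminorm A B (v ·) x ≤ Finset.univ.sup fun i => v (c i) * v (b i) := by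
  classical
  refine csInf_le (OrderBot.bddBelow _) ?_
  refine ⟨Fintype.card ι, fun j => c ((Fintype.equivFin ι).symm j),
    fun j => b ((Fintype.equivFin ι).symm j), ?_, ?_⟩
  · rw [hx, ← Equiv.sum_comp (Fintype.equivFin ι).symm
      (fun i => c i • KaehlerDifferential.D A B (b i))]
  · rw [my_sup_comp_equiv (Fintype.equivFin ι).symm (fun i => v (c i) * v (b i))]

lemma k_nonempty (x : Ω[B⁄A]) :
    { r | ∃ (n : ℕ) (c b : Fin n → B),
      x = ∑ i, c i • KaehlerDifferential.D A B (b i) ∧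
      r = Finset.univ.sup fun i => v (c i) * v (b i) }.Nonempty := by
  obtain ⟨n, c, b, h⟩ := k_rep_exists (A := A) x
  exact ⟨_, n, c, b, h, rfl⟩

lemma k_lt_rep {x : Ω[B⁄A]} {t : ℝ≥0} (h : kahlerSeminorm A B (v ·) x < t) :
    ∃ (n : ℕ) (c b : Fin n → B), x = ∑ i, c i • KaehlerDifferential.D A B (b i) ∧
      (Finset.univ.sup fun i => v (c i) * v (b i)) < t := by
  obtain ⟨r, ⟨n, c, b, hx, rfl⟩, hr⟩ := exists_lt_of_csInf_lt (k_nonempty v x) h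
  exact ⟨n, c, b, hx, hr⟩

lemma k_zero : kahlerSeminorm A B (v ·) (0 : Ω[B⁄A]) = 0 := by
  have := k_le_of_rep (A := A) v (ι := Fin 0) ![] ![] (x := 0) (by simp)
  simpa using this

lemma k_D_le (b : B) : kahlerSeminorm A B (v ·) (KaehlerDifferential.D A B b) ≤ v b := by
  have := k_le_of_rep (A := A) v (ι := Fin 1) (fun _ => 1) (fun _ => b)
    (x := KaehlerDifferential.D A B b) (by simp)
  simpa using this

lemma k_ultra (x y : Ω[B⁄A]) :
    kahlerSeminorm A B (v ·) (x + y)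
      ≤ max (kahlerSeminorm A B (v ·) x) (kahlerSeminorm A B (v ·) y) := by
  refine le_of_forall_gt_imp_ge_of_dense fun t ht => ?_
  obtain ⟨n₁, c₁, b₁, h₁, hs₁⟩ := k_lt_rep v ((le_max_left _ _).trans_lt ht)
  obtain ⟨n₂, c₂, b₂, h₂, hs₂⟩ := k_lt_rep v ((le_max_right _ _).trans_lt ht)
  have hx : x + y = ∑ s : Fin n₁ ⊕ Fin n₂,
      Sum.elim c₁ c₂ s • KaehlerDifferential.D A B (Sum.elim b₁ b₂ s) := by
    rw [Fintype.sum_sum_type]; simp [h₁, h₂]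
  refine (k_le_of_rep v _ _ hx).trans ?_
  have : (Finset.univ.sup fun s : Fin n₁ ⊕ Fin n₂ =>
      v (Sum.elim c₁ c₂ s) * v (Sum.elim b₁ b₂ s))
      = max (Finset.univ.sup fun i => v (c₁ i) * v (b₁ i))
          (Finset.univ.sup fun i => v (c₂ i) * v (b₂ i)) := by
    rw [← my_sup_sum_elim]
    congr 1
    funext s
    cases s <;> rfl
  rw [this]
  exact max_le hs₁.le hs₂.le

lemma k_sum {σ : Type*} (s : Finset σ) (u : σ → Ω[B⁄A]) :
    kahlerSeminorm A B (v ·) (∑ i ∈ s, u i) ≤ s.sup fun i => kahlerSeminorm A B (v ·) (u i) :=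
  my_ultra_sum _ (k_zero v) (k_ultra v) s u

lemma k_smul (a : B) (x : Ω[B⁄A]) :
    kahlerSeminorm A B (v ·) (a • x) ≤ v a * kahlerSeminorm A B (v ·) x := by
  refine le_of_forall_gt_imp_ge_of_dense fun t ht => ?_
  obtain ⟨n, c, b, hx, hs⟩ :
      ∃ (n : ℕ) (c b : Fin n → B), x = ∑ i, c i • KaehlerDifferential.D A B (b i) ∧
        v a * (Finset.univ.sup fun i => v (c i) * v (b i)) ≤ t := by
    rcases eq_or_ne (v a) 0 with hva | hva
    · obtain ⟨n, c, b, h⟩ := k_rep_exists (A := A) x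
      exact ⟨n, c, b, h, by simp [hva]⟩
    · have h2 : kahlerSeminorm A B (v ·) x < t / v a := by
        rw [lt_div_iff₀ (hva.bot_lt)]
        calc kahlerSeminorm A B (v ·) x * v a = v a * kahlerSeminorm A B (v ·) x := mul_comm _ _
          _ < t := ht
      obtain ⟨n, c, b, h, hsup⟩ := k_lt_rep v h2
      refine ⟨n, c, b, h, ?_⟩
      calc v a * Finset.univ.sup (fun i => v (c i) * v (b i)) ≤ v a * (t / v a) :=
            mul_le_mul_right hsup.le _
        _ ≤ t := le_of_eq (by rw [mul_comm, div_mul_cancel₀ _ hva])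
  have hax : a • x = ∑ i, (a * c i) • KaehlerDifferential.D A B (b i) := by
    rw [hx, Finset.smul_sum]
    simp [smul_smul]
  refine (k_le_of_rep v _ _ hax).trans ?_
  refine le_trans (Finset.sup_le fun i _ => ?_) hs
  calc v (a * c i) * v (b i) = v a * (v (c i) * v (b i)) := by rw [map_mul, mul_assoc]
    _ ≤ v a * Finset.univ.sup (fun i => v (c i) * v (b i)) :=
        mul_le_mul_right
          (Finset.le_sup (f := fun i => v (c i) * v (b i)) (Finset.mem_univ i)) _

end KahlerLemmas

/-- The tensor seminorm on `M ⊗[A] N`: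
`‖x‖ = inf` over all representations `x = ∑ mᵢ ⊗ nᵢ` of `max vM mᵢ * vN nᵢ`. -/
noncomputable def tensorSeminorm (A M N : Type*) [CommRing A] [AddCommGroup M] [Module A M]
    [AddCommGroup N] [Module A N] (vM : M → ℝ≥0) (vN : N → ℝ≥0)
    (x : TensorProduct A M N) : ℝ≥0 :=
  sInf { r | ∃ (n : ℕ) (m : Fin n → M) (w : Fin n → N),
    x = ∑ i, m i ⊗ₜ[A] w i ∧
    r = Finset.univ.sup fun i => vM (m i) * vN (w i) }

section TensorLemmas
variable {A M N : Type*} [CommRing A] [AddCommGroup M] [Module A M]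
    [AddCommGroup N] [Module A N] (vM : M → ℝ≥0) (vN : N → ℝ≥0)

lemma t_rep_exists (x : M ⊗[A] N) :
    ∃ (n : ℕ) (m : Fin n → M) (w : Fin n → N), x = ∑ i, m i ⊗ₜ[A] w i := by
  induction x with
  | zero => exact ⟨0, ![], ![], by simp⟩
  | tmul m w => exact ⟨1, fun _ => m, fun _ => w, by simp⟩
  | add y z hy hz =>
    obtain ⟨n₁, m₁, w₁, h₁⟩ := hy
    obtain ⟨n₂, m₂, w₂, h₂⟩ := hz
    refine ⟨n₁ + n₂, Fin.append m₁ m₂, Fin.append w₁ w₂, ?_⟩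
    rw [Fin.sum_univ_add]
    simp [Fin.append_left, Fin.append_right, h₁, h₂]

lemma t_le_of_rep {ι : Type*} [Fintype ι] (m : ι → M) (w : ι → N) {x : M ⊗[A] N}
    (hx : x = ∑ i, m i ⊗ₜ[A] w i) :
    tensorSeminorm A M N vM vN x ≤ Finset.univ.sup fun i => vM (m i) * vN (w i) := by
  classical
  refine csInf_le (OrderBot.bddBelow _) ?_
  refine ⟨Fintype.card ι, fun j => m ((Fintype.equivFin ι).symm j),
    fun j => w ((Fintype.equivFin ι).symm j), ?_, ?_⟩
  · rw [hx, ← Equiv.sum_comp (Fintype.equivFin ι).symm (fun i => m i ⊗ₜ[A] w i)]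
  · rw [my_sup_comp_equiv (Fintype.equivFin ι).symm (fun i => vM (m i) * vN (w i))]

lemma t_nonempty (x : M ⊗[A] N) :
    { r | ∃ (n : ℕ) (m : Fin n → M) (w : Fin n → N),
      x = ∑ i, m i ⊗ₜ[A] w i ∧
      r = Finset.univ.sup fun i => vM (m i) * vN (w i) }.Nonempty := by
  obtain ⟨n, m, w, h⟩ := t_rep_exists x
  exact ⟨_, n, m, w, h, rfl⟩

lemma t_lt_rep {x : M ⊗[A] N} {t : ℝ≥0} (h : tensorSeminorm A M N vM vN x < t) :
    ∃ (n : ℕ) (m : Fin n → M) (w : Fin n → N), x = ∑ i, m i ⊗ₜ[A] w i ∧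
      (Finset.univ.sup fun i => vM (m i) * vN (w i)) < t := by
  obtain ⟨r, ⟨n, m, w, hx, rfl⟩, hr⟩ := exists_lt_of_csInf_lt (t_nonempty vM vN x) h
  exact ⟨n, m, w, hx, hr⟩

lemma t_zero : tensorSeminorm A M N vM vN 0 = 0 := by
  have := t_le_of_rep (A := A) vM vN (ι := Fin 0) ![] ![] (x := 0) (by simp)
  simpa using this

lemma t_ultra (x y : M ⊗[A] N) :
    tensorSeminorm A M N vM vN (x + y)
      ≤ max (tensorSeminorm A M N vM vN x) (tensorSeminorm A M N vM vN y) := by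
  refine le_of_forall_gt_imp_ge_of_dense fun t ht => ?_
  obtain ⟨n₁, m₁, w₁, h₁, hs₁⟩ := t_lt_rep vM vN ((le_max_left _ _).trans_lt ht)
  obtain ⟨n₂, m₂, w₂, h₂, hs₂⟩ := t_lt_rep vM vN ((le_max_right _ _).trans_lt ht)
  have hx : x + y = ∑ s : Fin n₁ ⊕ Fin n₂, Sum.elim m₁ m₂ s ⊗ₜ[A] Sum.elim w₁ w₂ s := by
    rw [Fintype.sum_sum_type]; simp [h₁, h₂]
  refine (t_le_of_rep vM vN _ _ hx).trans ?_
  have : (Finset.univ.sup fun s : Fin n₁ ⊕ Fin n₂ =>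
      vM (Sum.elim m₁ m₂ s) * vN (Sum.elim w₁ w₂ s))
      = max (Finset.univ.sup fun i => vM (m₁ i) * vN (w₁ i))
          (Finset.univ.sup fun i => vM (m₂ i) * vN (w₂ i)) := by
    rw [← my_sup_sum_elim]
    congr 1
    funext s
    cases s <;> rfl
  rw [this]
  exact max_le hs₁.le hs₂.le

lemma t_sub_ultra (x y : M ⊗[A] N) :
    tensorSeminorm A M N vM vN x
      ≤ max (tensorSeminorm A M N vM vN y) (tensorSeminorm A M N vM vN (x - y)) := by
  have := t_ultra vM vN y (x - y)
  simpa using this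

lemma my_comm_comm (x : M ⊗[A] N) :
    TensorProduct.comm A N M (TensorProduct.comm A M N x) = x := by
  induction x with
  | zero => simp
  | tmul m n => simp
  | add y z hy hz => simp [map_add, hy, hz]

lemma t_comm_le (x : M ⊗[A] N) :
    tensorSeminorm A N M vN vM (TensorProduct.comm A M N x)
      ≤ tensorSeminorm A M N vM vN x := by
  refine le_of_forall_gt_imp_ge_of_dense fun t ht => ?_
  obtain ⟨n, m, w, hx, hs⟩ := t_lt_rep vM vN ht
  have hc : TensorProduct.comm A M N x = ∑ i, w i ⊗ₜ[A] m i := by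
    rw [hx, map_sum]
    simp
  refine (t_le_of_rep vN vM _ _ hc).trans ?_
  refine le_trans (le_of_eq (Finset.sup_congr rfl fun i _ => mul_comm _ _)) hs.le

lemma t_comm_eq (x : M ⊗[A] N) :
    tensorSeminorm A N M vN vM (TensorProduct.comm A M N x)
      = tensorSeminorm A M N vM vN x := by
  refine le_antisymm (t_comm_le vM vN x) ?_
  have := t_comm_le vN vM (TensorProduct.comm A M N x)
  rwa [my_comm_comm] at this

end TensorLemmas

section LeftSmul
variable {K L Q : Type*} [Field K] [Field L] [Algebra K L] [AddCommGroup Q] [Module K Q]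

lemma tN_smul (vL : Valuation L ℝ≥0) (vQ : Q → ℝ≥0) (l : L) (w : L ⊗[K] Q) :
    tensorSeminorm K L Q (vL ·) vQ (l • w) ≤ vL l * tensorSeminorm K L Q (vL ·) vQ w := by
  refine le_of_forall_gt_imp_ge_of_dense fun t ht => ?_
  obtain ⟨n, m, q, hw, hs⟩ :
      ∃ (n : ℕ) (m : Fin n → L) (q : Fin n → Q), w = ∑ i, m i ⊗ₜ[K] q i ∧
        vL l * (Finset.univ.sup fun i => vL (m i) * vQ (q i)) ≤ t := by
    rcases eq_or_ne (vL l) 0 with hvl | hvl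
    · obtain ⟨n, m, q, h⟩ := t_rep_exists w
      exact ⟨n, m, q, h, by simp [hvl]⟩
    · have h2 : tensorSeminorm K L Q (vL ·) vQ w < t / vL l := by
        rw [lt_div_iff₀ (hvl.bot_lt)]
        calc tensorSeminorm K L Q (vL ·) vQ w * vL l
            = vL l * tensorSeminorm K L Q (vL ·) vQ w := mul_comm _ _
          _ < t := ht
      obtain ⟨n, m, q, h, hsup⟩ := t_lt_rep _ _ h2
      refine ⟨n, m, q, h, ?_⟩
      calc vL l * Finset.univ.sup (fun i => vL (m i) * vQ (q i)) ≤ vL l * (t / vL l) :=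
            mul_le_mul_right hsup.le _
        _ ≤ t := le_of_eq (by rw [mul_comm, div_mul_cancel₀ _ hvl])
  have hlw : l • w = ∑ i, (l * m i) ⊗ₜ[K] q i := by
    rw [hw, Finset.smul_sum]
    refine Finset.sum_congr rfl fun i _ => ?_
    rw [TensorProduct.smul_tmul', smul_eq_mul]
  refine (t_le_of_rep _ _ _ _ hlw).trans ?_
  refine le_trans (Finset.sup_le fun i _ => ?_) hs
  calc vL (l * m i) * vQ (q i) = vL l * (vL (m i) * vQ (q i)) := by rw [map_mul, mul_assoc]
    _ ≤ vL l * Finset.univ.sup (fun i => vL (m i) * vQ (q i)) :=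
        mul_le_mul_right
          (Finset.le_sup (f := fun i => vL (m i) * vQ (q i)) (Finset.mem_univ i)) _

end LeftSmul

section TmulLe
variable {A M N : Type*} [CommRing A] [AddCommGroup M] [Module A M]
    [AddCommGroup N] [Module A N] (vM : M → ℝ≥0) (vN : N → ℝ≥0)

lemma t_tmul_le (m : M) (n : N) :
    tensorSeminorm A M N vM vN (m ⊗ₜ[A] n) ≤ vM m * vN n := by
  have := t_le_of_rep (A := A) vM vN (ι := Fin 1) (fun _ => m) (fun _ => n)
    (x := m ⊗ₜ[A] n) (by simp)
  simpa using this

end TmulLe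

section Main
variable {A K L : Type*} [CommRing A] [Field K] [Field L]
    [Algebra A K] [Algebra A L] [Algebra K L] [IsScalarTower A K L]

/-- The submodule of null sequences in `ℕ → L ⊗[K] Ω[K⁄A]`. -/
noncomputable def Znull (vK : Valuation K ℝ≥0) (vL : Valuation L ℝ≥0) :
    Submodule L (ℕ → L ⊗[K] Ω[K⁄A]) where
  carrier := {f | Filter.Tendsto
    (fun n => tensorSeminorm K L (Ω[K⁄A]) (vL ·) (kahlerSeminorm A K (vK ·)) (f n))
    Filter.atTop (nhds 0)}
  add_mem' := fun hf hg => my_squeeze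
    (fun n => t_ultra (vL ·) (kahlerSeminorm A K (vK ·)) _ _) (my_tendsto_max hf hg)
  zero_mem' := by
    have h : ∀ n : ℕ, tensorSeminorm K L (Ω[K⁄A]) (vL ·) (kahlerSeminorm A K (vK ·))
        ((0 : ℕ → L ⊗[K] Ω[K⁄A]) n) = 0 := fun n => t_zero _ _
    simpa only [Set.mem_setOf_eq, h] using
      (tendsto_const_nhds : Filter.Tendsto (fun _ : ℕ => (0:ℝ≥0)) Filter.atTop (nhds 0))
  smul_mem' := fun l f hf => my_squeeze (fun n => tN_smul vL _ l (f n))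
    (by simpa using hf.const_mul (vL l))

lemma mem_Znull {vK : Valuation K ℝ≥0} {vL : Valuation L ℝ≥0} {f : ℕ → L ⊗[K] Ω[K⁄A]} :
    f ∈ Znull (A := A) vK vL ↔ Filter.Tendsto
      (fun n => tensorSeminorm K L (Ω[K⁄A]) (vL ·) (kahlerSeminorm A K (vK ·)) (f n))
      Filter.atTop (nhds 0) := Iff.rfl

variable (vK : Valuation K ℝ≥0) (vL : Valuation L ℝ≥0)

lemma app_tendsto (app : L → ℕ → K)
    (happ : ∀ (b : L) (n : ℕ), vL (b - algebraMap K L (app b n)) < 1/(n+1)) (b : L) :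
    Filter.Tendsto (fun n => vL (b - algebraMap K L (app b n))) Filter.atTop (nhds 0) :=
  my_squeeze (fun n => (happ b n).le) my_tendsto_err

lemma app_bound (app : L → ℕ → K)
    (happ : ∀ (b : L) (n : ℕ), vL (b - algebraMap K L (app b n)) < 1/(n+1)) (b : L) (n : ℕ) :
    vL (algebraMap K L (app b n)) ≤ vL b + 1 := by
  have h1 : vL (algebraMap K L (app b n)) = vL (b - (b - algebraMap K L (app b n))) := by
    rw [sub_sub_cancel]
  rw [h1]
  refine (vL.map_sub _ _).trans (max_le (self_le_add_right _ _) ?_)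
  refine le_trans (le_trans (happ b n).le ?_) le_add_self
  rw [div_le_one (by positivity)]
  exact le_add_self

lemma vL_sigma_bound {b y : L} (hb : vL (b - y) ≤ 1) : vL y ≤ vL b + 1 := by
  have h1 : vL y = vL (b - (b - y)) := by rw [sub_sub_cancel]
  rw [h1]
  exact (vL.map_sub _ _).trans (max_le (self_le_add_right _ _) (hb.trans le_add_self))

lemma myP (hext : ∀ x : K, vL (algebraMap K L x) = vK x) (app : L → ℕ → K)
    (happ : ∀ (b : L) (n : ℕ), vL (b - algebraMap K L (app b n)) < 1/(n+1)) (b : L) (x : ℕ → K)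
    (hx : Filter.Tendsto (fun n => vL (b - algebraMap K L (x n))) Filter.atTop (nhds 0)) :
    (Znull (A := A) vK vL).mkQ (fun n => (1:L) ⊗ₜ[K] KaehlerDifferential.D A K (x n)) =
    (Znull (A := A) vK vL).mkQ (fun n => (1:L) ⊗ₜ[K] KaehlerDifferential.D A K (app b n)) := by
  rw [Submodule.mkQ_apply, Submodule.mkQ_apply, Submodule.Quotient.eq, mem_Znull]
  refine my_squeeze (fun n => ?_) (my_tendsto_max hx (app_tendsto vL app happ b))
  simp only [Pi.sub_apply]
  have hpt : (1:L) ⊗ₜ[K] KaehlerDifferential.D A K (x n)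
      - (1:L) ⊗ₜ[K] KaehlerDifferential.D A K (app b n)
      = (1:L) ⊗ₜ[K] KaehlerDifferential.D A K (x n - app b n) := by
    rw [map_sub, TensorProduct.tmul_sub]
  rw [hpt]
  refine (t_tmul_le _ _ _ _).trans ?_
  rw [Valuation.map_one, one_mul]
  refine ((k_D_le vK _).trans ?_)
  rw [← hext, map_sub]
  have h2 : algebraMap K L (x n) - algebraMap K L (app b n)
      = (b - algebraMap K L (app b n)) - (b - algebraMap K L (x n)) := by ring
  rw [h2]
  exact (vL.map_sub _ _).trans_eq (max_comm _ _)

/-- The limit derivation `L → (ℕ → L ⊗[K] Ω[K⁄A]) ⧸ Znull`. -/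
noncomputable def myDeriv (hext : ∀ x : K, vL (algebraMap K L x) = vK x) (app : L → ℕ → K)
    (happ : ∀ (b : L) (n : ℕ), vL (b - algebraMap K L (app b n)) < 1/(n+1)) :
    Derivation A L ((ℕ → L ⊗[K] Ω[K⁄A]) ⧸ Znull (A := A) vK vL) where
  toFun b := (Znull (A := A) vK vL).mkQ
    (fun n => (1:L) ⊗ₜ[K] KaehlerDifferential.D A K (app b n))
  map_add' b c := by
    have hconv : Filter.Tendsto
        (fun n => vL (b + c - algebraMap K L (app b n + app c n))) Filter.atTop (nhds 0) := by
      refine my_squeeze (fun n => ?_)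
        (my_tendsto_max (app_tendsto vL app happ b) (app_tendsto vL app happ c))
      have h1 : b + c - algebraMap K L (app b n + app c n)
          = (b - algebraMap K L (app b n)) + (c - algebraMap K L (app c n)) := by
        rw [map_add]; ring
      rw [h1]
      exact vL.map_add _ _
    have h := myP (A := A) vK vL hext app happ (b + c) (fun n => app b n + app c n) hconv
    show (Znull (A := A) vK vL).mkQ
        (fun n => (1:L) ⊗ₜ[K] KaehlerDifferential.D A K (app (b + c) n))
      = (Znull (A := A) vK vL).mkQ
          (fun n => (1:L) ⊗ₜ[K] KaehlerDifferential.D A K (app b n))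
        + (Znull (A := A) vK vL).mkQ
          (fun n => (1:L) ⊗ₜ[K] KaehlerDifferential.D A K (app c n))
    rw [← h, ← map_add]
    congr 1
    funext n
    show (1:L) ⊗ₜ[K] KaehlerDifferential.D A K (app b n + app c n)
        = (1:L) ⊗ₜ[K] KaehlerDifferential.D A K (app b n)
          + (1:L) ⊗ₜ[K] KaehlerDifferential.D A K (app c n)
    rw [map_add, TensorProduct.tmul_add]
  map_smul' a b := by
    have hconv : Filter.Tendsto
        (fun n => vL (a • b - algebraMap K L (algebraMap A K a * app b n)))
        Filter.atTop (nhds 0) := by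
      refine my_squeeze (fun n => ?_)
        (by simpa using (app_tendsto vL app happ b).const_mul (vL (algebraMap A L a)))
      have h1 : a • b - algebraMap K L (algebraMap A K a * app b n)
          = algebraMap A L a * (b - algebraMap K L (app b n)) := by
        rw [Algebra.smul_def, map_mul, ← IsScalarTower.algebraMap_apply, mul_sub]
      rw [h1, map_mul]
    have h := myP (A := A) vK vL hext app happ (a • b) (fun n => algebraMap A K a * app b n) hconv
    show (Znull (A := A) vK vL).mkQ
        (fun n => (1:L) ⊗ₜ[K] KaehlerDifferential.D A K (app (a • b) n))
      = a • (Znull (A := A) vK vL).mkQ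
          (fun n => (1:L) ⊗ₜ[K] KaehlerDifferential.D A K (app b n))
    rw [← h]
    rw [← algebraMap_smul (R := A) L a ((Znull (A := A) vK vL).mkQ
      (fun n => (1:L) ⊗ₜ[K] KaehlerDifferential.D A K (app b n))), ← map_smul]
    congr 1
    funext n
    show (1:L) ⊗ₜ[K] KaehlerDifferential.D A K (algebraMap A K a * app b n)
        = algebraMap A L a • ((1:L) ⊗ₜ[K] KaehlerDifferential.D A K (app b n))
    rw [TensorProduct.smul_tmul', smul_eq_mul, mul_one]
    rw [← Algebra.smul_def, Derivation.map_smul]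
    rw [← algebraMap_smul (R := A) K a (KaehlerDifferential.D A K (app b n))]
    rw [← TensorProduct.smul_tmul, Algebra.smul_def, mul_one, ← IsScalarTower.algebraMap_apply]
  map_one_eq_zero' := by
    have hconv : Filter.Tendsto
        (fun n : ℕ => vL ((1:L) - algebraMap K L ((fun _ => (1:K)) n))) Filter.atTop (nhds 0) := by
      simpa using (tendsto_const_nhds : Filter.Tendsto (fun _ : ℕ => (0:ℝ≥0)) Filter.atTop (nhds 0))
    have h := myP (A := A) vK vL hext app happ 1 (fun _ => 1) hconv
    show (Znull (A := A) vK vL).mkQ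
      (fun n => (1:L) ⊗ₜ[K] KaehlerDifferential.D A K (app 1 n)) = 0
    rw [← h]
    have h2 : (fun n : ℕ => (1:L) ⊗ₜ[K] KaehlerDifferential.D A K ((fun _ => (1:K)) n))
        = (0 : ℕ → L ⊗[K] Ω[K⁄A]) := by
      funext n
      simp
    rw [h2, map_zero]
  leibniz' a b := by
    have hconv : Filter.Tendsto
        (fun n => vL (a * b - algebraMap K L (app a n * app b n))) Filter.atTop (nhds 0) := by
      refine my_squeeze (fun n => ?_) (my_tendsto_max
        (by simpa using (app_tendsto vL app happ b).const_mul (vL a))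
        (by simpa using (app_tendsto vL app happ a).const_mul (vL b + 1)))
      have h1 : a * b - algebraMap K L (app a n * app b n)
          = a * (b - algebraMap K L (app b n))
            + algebraMap K L (app b n) * (a - algebraMap K L (app a n)) := by
        rw [map_mul]; ring
      rw [h1]
      refine (vL.map_add _ _).trans (max_le_max ?_ ?_)
      · rw [map_mul]
      · rw [map_mul]
        exact mul_le_mul_left (app_bound vL app happ b n) _
    have h := myP (A := A) vK vL hext app happ (a * b) (fun n => app a n * app b n) hconv
    show (Znull (A := A) vK vL).mkQ
        (fun n => (1:L) ⊗ₜ[K] KaehlerDifferential.D A K (app (a * b) n))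
      = a • (Znull (A := A) vK vL).mkQ
          (fun n => (1:L) ⊗ₜ[K] KaehlerDifferential.D A K (app b n))
        + b • (Znull (A := A) vK vL).mkQ
          (fun n => (1:L) ⊗ₜ[K] KaehlerDifferential.D A K (app a n))
    rw [← h, ← map_smul, ← map_smul, ← map_add]
    rw [Submodule.mkQ_apply, Submodule.mkQ_apply, Submodule.Quotient.eq, mem_Znull]
    refine my_squeeze (fun n => ?_) (my_tendsto_max
      (by simpa using (app_tendsto vL app happ a).mul_const (vL b + 1))
      (by simpa using (app_tendsto vL app happ b).mul_const (vL a + 1)))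
    simp only [Pi.sub_apply, Pi.add_apply, Pi.smul_apply]
    have hsplit : (1:L) ⊗ₜ[K] KaehlerDifferential.D A K (app a n * app b n)
        - (a • ((1:L) ⊗ₜ[K] KaehlerDifferential.D A K (app b n))
          + b • ((1:L) ⊗ₜ[K] KaehlerDifferential.D A K (app a n)))
        = (algebraMap K L (app a n) - a) ⊗ₜ[K] KaehlerDifferential.D A K (app b n)
          + (algebraMap K L (app b n) - b) ⊗ₜ[K] KaehlerDifferential.D A K (app a n) := by
      rw [Derivation.leibniz, TensorProduct.tmul_add]
      rw [TensorProduct.smul_tmul', smul_eq_mul, mul_one]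
      rw [TensorProduct.smul_tmul', smul_eq_mul, mul_one]
      have e1 : (1:L) ⊗ₜ[K] (app a n • KaehlerDifferential.D A K (app b n))
          = algebraMap K L (app a n) ⊗ₜ[K] KaehlerDifferential.D A K (app b n) := by
        rw [← TensorProduct.smul_tmul, Algebra.smul_def, mul_one]
      have e2 : (1:L) ⊗ₜ[K] (app b n • KaehlerDifferential.D A K (app a n))
          = algebraMap K L (app b n) ⊗ₜ[K] KaehlerDifferential.D A K (app a n) := by
        rw [← TensorProduct.smul_tmul, Algebra.smul_def, mul_one]
      rw [e1, e2, TensorProduct.sub_tmul, TensorProduct.sub_tmul]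
      abel
    rw [hsplit]
    refine (t_ultra _ _ _ _).trans (max_le_max ?_ ?_)
    · refine (t_tmul_le _ _ _ _).trans ?_
      rw [Valuation.map_sub_swap]
      refine mul_le_mul_right ((k_D_le vK _).trans ?_) _
      rw [← hext]
      exact vL_sigma_bound vL (le_trans (happ b n).le (by
        rw [div_le_one (by positivity)]; exact le_add_self))
    · refine (t_tmul_le _ _ _ _).trans ?_
      rw [Valuation.map_sub_swap]
      refine mul_le_mul_right ((k_D_le vK _).trans ?_) _
      rw [← hext]
      exact vL_sigma_bound vL (le_trans (happ a n).le (by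
        rw [div_le_one (by positivity)]; exact le_add_self))

lemma myDeriv_apply (hext : ∀ x : K, vL (algebraMap K L x) = vK x) (app : L → ℕ → K)
    (happ : ∀ (b : L) (n : ℕ), vL (b - algebraMap K L (app b n)) < 1/(n+1)) (b : L) :
    myDeriv (A := A) vK vL hext app happ b = (Znull (A := A) vK vL).mkQ
      (fun n => (1:L) ⊗ₜ[K] KaehlerDifferential.D A K (app b n)) := rfl

end Main

section Ineqs
variable {A K L : Type*} [CommRing A] [Field K] [Field L]
    [Algebra A K] [Algebra A L] [Algebra K L] [IsScalarTower A K L]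
    (vK : Valuation K ℝ≥0) (vL : Valuation L ℝ≥0)

lemma k_map_le (hext : ∀ x : K, vL (algebraMap K L x) = vK x) (ω : Ω[K⁄A]) :
    kahlerSeminorm A L (vL ·) (KaehlerDifferential.map A A K L ω)
      ≤ kahlerSeminorm A K (vK ·) ω := by
  refine le_of_forall_gt_imp_ge_of_dense fun t ht => ?_
  obtain ⟨n, c, b, h, hs⟩ := k_lt_rep vK ht
  have hrep : KaehlerDifferential.map A A K L ω
      = ∑ i, algebraMap K L (c i) • KaehlerDifferential.D A L (algebraMap K L (b i)) := by
    rw [h, map_sum]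
    refine Finset.sum_congr rfl fun i _ => ?_
    rw [map_smul, KaehlerDifferential.map_D, algebraMap_smul]
  refine (k_le_of_rep vL _ _ hrep).trans ?_
  refine le_trans (le_of_eq ?_) hs.le
  exact Finset.sup_congr rfl fun i _ => by rw [hext, hext]

theorem aux_le (hext : ∀ x : K, vL (algebraMap K L x) = vK x)
    (ψ : TensorProduct K (Ω[K⁄A]) L →ₗ[K] Ω[L⁄A])
    (hψ : ∀ (ω : Ω[K⁄A]) (l : L), ψ (ω ⊗ₜ l) = l • (KaehlerDifferential.map A A K L ω))
    (z : TensorProduct K (Ω[K⁄A]) L) :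
    kahlerSeminorm A L (vL ·) (ψ z)
      ≤ tensorSeminorm K (Ω[K⁄A]) L (kahlerSeminorm A K (vK ·)) (vL ·) z := by
  refine le_of_forall_gt_imp_ge_of_dense fun t ht => ?_
  obtain ⟨n, m, w, hz, hs⟩ := t_lt_rep _ _ ht
  have hψz : ψ z = ∑ i, w i • KaehlerDifferential.map A A K L (m i) := by
    rw [hz, map_sum]
    exact Finset.sum_congr rfl fun i _ => hψ _ _
  rw [hψz]
  refine (k_sum vL Finset.univ _).trans (le_trans (Finset.sup_le fun i _ => ?_) hs.le)
  calc kahlerSeminorm A L (vL ·) (w i • KaehlerDifferential.map A A K L (m i))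
      ≤ vL (w i) * kahlerSeminorm A L (vL ·) (KaehlerDifferential.map A A K L (m i)) :=
        k_smul vL _ _
    _ ≤ vL (w i) * kahlerSeminorm A K (vK ·) (m i) :=
        mul_le_mul_right (k_map_le vK vL hext (m i)) _
    _ = kahlerSeminorm A K (vK ·) (m i) * vL (w i) := mul_comm _ _
    _ ≤ Finset.univ.sup (fun i => kahlerSeminorm A K (vK ·) (m i) * vL (w i)) :=
        Finset.le_sup (f := fun i => kahlerSeminorm A K (vK ·) (m i) * vL (w i))
          (Finset.mem_univ i)

set_option maxHeartbeats 1000000 in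
set_option synthInstance.maxHeartbeats 200000 in
theorem aux_ge (hext : ∀ x : K, vL (algebraMap K L x) = vK x)
    (hdense : ∀ (l : L) (ε : ℝ≥0), 0 < ε → ∃ x : K, vL (l - algebraMap K L x) < ε)
    (ψ : TensorProduct K (Ω[K⁄A]) L →ₗ[K] Ω[L⁄A])
    (hψ : ∀ (ω : Ω[K⁄A]) (l : L), ψ (ω ⊗ₜ l) = l • (KaehlerDifferential.map A A K L ω))
    (z : TensorProduct K (Ω[K⁄A]) L) :
    tensorSeminorm K (Ω[K⁄A]) L (kahlerSeminorm A K (vK ·)) (vL ·) z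
      ≤ kahlerSeminorm A L (vL ·) (ψ z) := by
  classical
  have happ' : ∀ (b : L) (n : ℕ), ∃ x : K, vL (b - algebraMap K L x) < 1/(n+1) :=
    fun b n => hdense b _ (by positivity)
  choose app happ using happ'
  set DD := myDeriv (A := A) vK vL hext app happ with hDD
  set Φ := DD.liftKaehlerDifferential with hΦ
  have hS : ∀ ω : Ω[K⁄A], Φ (KaehlerDifferential.map A A K L ω)
      = (Znull (A := A) vK vL).mkQ (fun _ => (1:L) ⊗ₜ[K] ω) := by
    intro ω
    have hω : ω ∈ Submodule.span K (Set.range (KaehlerDifferential.D A K)) := by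
      rw [KaehlerDifferential.span_range_derivation]; trivial
    induction hω using Submodule.span_induction with
    | mem y hy =>
      obtain ⟨u, rfl⟩ := hy
      rw [KaehlerDifferential.map_D]
      have h1 : Φ (KaehlerDifferential.D A L (algebraMap K L u)) = DD (algebraMap K L u) :=
        Derivation.liftKaehlerDifferential_comp_D DD _
      rw [h1, hDD, myDeriv_apply]
      have h2 := myP (A := A) vK vL hext app happ (algebraMap K L u) (fun _ => u)
        (by simpa using
          (tendsto_const_nhds : Filter.Tendsto (fun _ : ℕ => (0:ℝ≥0)) Filter.atTop (nhds 0)))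
      exact h2.symm
    | zero =>
      rw [map_zero, map_zero]
      have : (fun _ : ℕ => (1:L) ⊗ₜ[K] (0 : Ω[K⁄A])) = (0 : ℕ → L ⊗[K] Ω[K⁄A]) := by
        funext n; simp
      rw [this, map_zero]
    | add y y' _ _ ihy ihy' =>
      rw [map_add, map_add, ihy, ihy', ← map_add]
      congr 1
      funext n
      show (1:L) ⊗ₜ[K] y + (1:L) ⊗ₜ[K] y' = (1:L) ⊗ₜ[K] (y + y')
      rw [TensorProduct.tmul_add]
    | smul k y _ ih =>
      rw [map_smul, ← algebraMap_smul (R := K) L k (KaehlerDifferential.map A A K L y),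
        map_smul, ih, ← map_smul]
      congr 1
      funext n
      show algebraMap K L k • ((1:L) ⊗ₜ[K] y) = (1:L) ⊗ₜ[K] (k • y)
      rw [TensorProduct.smul_tmul', smul_eq_mul, mul_one, ← TensorProduct.smul_tmul,
        Algebra.smul_def, mul_one]
  have hIota : ∀ w : TensorProduct K (Ω[K⁄A]) L, Φ (ψ w)
      = (Znull (A := A) vK vL).mkQ (fun _ => (TensorProduct.comm K (Ω[K⁄A]) L) w) := by
    intro w
    induction w with
    | zero =>
      have h0 : (fun _ : ℕ => (TensorProduct.comm K (Ω[K⁄A]) L)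
          (0 : TensorProduct K (Ω[K⁄A]) L)) = (0 : ℕ → L ⊗[K] Ω[K⁄A]) := by
        funext _; simp
      rw [h0, map_zero, map_zero, map_zero]
    | tmul ω l =>
      rw [hψ, TensorProduct.comm_tmul, map_smul, hS, ← map_smul]
      congr 1
      funext n
      show l • ((1:L) ⊗ₜ[K] ω) = l ⊗ₜ[K] ω
      rw [TensorProduct.smul_tmul', smul_eq_mul, mul_one]
    | add u u' ihu ihu' =>
      rw [map_add, map_add, ihu, ihu', ← map_add]
      congr 1
      funext n
      show (TensorProduct.comm K (Ω[K⁄A]) L) u + (TensorProduct.comm K (Ω[K⁄A]) L) u'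
          = (TensorProduct.comm K (Ω[K⁄A]) L) (u + u')
      rw [map_add]
  refine le_of_forall_gt_imp_ge_of_dense fun t ht => ?_
  have ht0 : 0 < t := zero_le.trans_lt ht
  obtain ⟨n, c, b, hrep, hsup⟩ := k_lt_rep vL ht
  have h2 : Φ (ψ z) = (Znull (A := A) vK vL).mkQ
      (fun m => ∑ i, (c i) ⊗ₜ[K] KaehlerDifferential.D A K (app (b i) m)) := by
    rw [hrep, map_sum]
    have h2a : ∀ i : Fin n, Φ (c i • KaehlerDifferential.D A L (b i))
        = (Znull (A := A) vK vL).mkQ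
            (fun m => (c i) ⊗ₜ[K] KaehlerDifferential.D A K (app (b i) m)) := by
      intro i
      rw [map_smul, Derivation.liftKaehlerDifferential_comp_D, hDD, myDeriv_apply, ← map_smul]
      congr 1
      funext m
      show c i • ((1:L) ⊗ₜ[K] KaehlerDifferential.D A K (app (b i) m)) = _
      rw [TensorProduct.smul_tmul', smul_eq_mul, mul_one]
    rw [Finset.sum_congr rfl (fun i _ => h2a i), ← map_sum]
    congr 1
    funext m
    rw [Finset.sum_apply]
  have h3 := (hIota z).symm.trans h2
  rw [Submodule.mkQ_apply, Submodule.mkQ_apply, Submodule.Quotient.eq, mem_Znull] at h3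
  have hbound : ∀ m : ℕ, tensorSeminorm K L (Ω[K⁄A]) (vL ·) (kahlerSeminorm A K (vK ·))
      (∑ i, (c i) ⊗ₜ[K] KaehlerDifferential.D A K (app (b i) m))
      ≤ max (Finset.univ.sup fun i => vL (c i) * vL (b i))
          ((Finset.univ.sup fun i => vL (c i)) * (1/(m+1))) := by
    intro m
    refine (t_le_of_rep (A := K) (vL ·) (kahlerSeminorm A K (vK ·)) _ _ rfl).trans ?_
    refine Finset.sup_le fun i _ => ?_
    have h4 : kahlerSeminorm A K (vK ·) (KaehlerDifferential.D A K (app (b i) m))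
        ≤ vK (app (b i) m) := k_D_le vK _
    have h5 : vK (app (b i) m) ≤ max (vL (b i)) (1/(m+1)) := by
      rw [← hext]
      calc vL (algebraMap K L (app (b i) m))
          = vL (b i - (b i - algebraMap K L (app (b i) m))) := by rw [sub_sub_cancel]
        _ ≤ max (vL (b i)) (vL (b i - algebraMap K L (app (b i) m))) := vL.map_sub _ _
        _ ≤ max (vL (b i)) (1/(m+1)) := max_le_max le_rfl (happ (b i) m).le
    refine le_trans (mul_le_mul_right (h4.trans h5) (vL (c i))) ?_
    rcases le_total (vL (b i)) (1/(m+1)) with hbe | hbe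
    · rw [max_eq_right hbe]
      refine le_max_of_le_right (mul_le_mul_left ?_ _)
      exact Finset.le_sup (f := fun i => vL (c i)) (Finset.mem_univ i)
    · rw [max_eq_left hbe]
      refine le_max_of_le_left ?_
      exact Finset.le_sup (f := fun i => vL (c i) * vL (b i)) (Finset.mem_univ i)
  have hmax_t : ∀ᶠ m in Filter.atTop,
      tensorSeminorm K L (Ω[K⁄A]) (vL ·) (kahlerSeminorm A K (vK ·))
        (∑ i, (c i) ⊗ₜ[K] KaehlerDifferential.D A K (app (b i) m)) < t := by
    have hC : Filter.Tendsto
        (fun m : ℕ => (Finset.univ.sup fun i => vL (c i)) * (1/(m+1)))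
        Filter.atTop (nhds 0) := by
      simpa using my_tendsto_err.const_mul (Finset.univ.sup fun i => vL (c i))
    filter_upwards [hC.eventually_lt_const ht0] with m hm
    exact (hbound m).trans_lt (max_lt hsup hm)
  have h7 : ∀ᶠ m in Filter.atTop,
      tensorSeminorm K L (Ω[K⁄A]) (vL ·) (kahlerSeminorm A K (vK ·))
        ((TensorProduct.comm K (Ω[K⁄A]) L) z
          - ∑ i, (c i) ⊗ₜ[K] KaehlerDifferential.D A K (app (b i) m)) < t := by
    have := h3.eventually_lt_const ht0
    simpa using this
  obtain ⟨m, hm1, hm2⟩ := (hmax_t.and h7).exists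
  have h8 : tensorSeminorm K (Ω[K⁄A]) L (kahlerSeminorm A K (vK ·)) (vL ·) z
      = tensorSeminorm K L (Ω[K⁄A]) (vL ·) (kahlerSeminorm A K (vK ·))
          ((TensorProduct.comm K (Ω[K⁄A]) L) z) :=
    (t_comm_eq _ _ z).symm
  rw [h8]
  exact le_trans (t_sub_ultra _ _ _
    (∑ i, (c i) ⊗ₜ[K] KaehlerDifferential.D A K (app (b i) m))) (max_lt hm1 hm2).le

end Ineqs

/-- If `L/K` is an extension of real-valued fields (valuations with values in `ℝ≥0`) with `K`
dense in `L`, and `A → K` is a ring homomorphism, then the canonical map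
`ψ : Ω_{K/A} ⊗_K L → Ω_{L/A}` (characterized by `ψ(ω ⊗ l) = l • (map ω)`) is an isometry for the
tensor seminorm (of the Kähler seminorm on `Ω_{K/A}` and the absolute value of `L`) on the source
and the Kähler seminorm on the target, and has dense image. -/
theorem kahler_seminorm_dense_extension_isometry_dense_image
    {A K L : Type*} [CommRing A] [Field K] [Field L]
    [Algebra A K] [Algebra A L] [Algebra K L] [IsScalarTower A K L]
    (vK : Valuation K ℝ≥0) (vL : Valuation L ℝ≥0)
    (hext : ∀ x : K, vL (algebraMap K L x) = vK x)
    (hdense : ∀ (l : L) (ε : ℝ≥0), 0 < ε → ∃ x : K, vL (l - algebraMap K L x) < ε)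
    (ψ : TensorProduct K (Ω[K⁄A]) L →ₗ[K] Ω[L⁄A])
    (hψ : ∀ (ω : Ω[K⁄A]) (l : L), ψ (ω ⊗ₜ l) = l • (KaehlerDifferential.map A A K L ω)) :
    (∀ x, kahlerSeminorm A L (vL ·) (ψ x)
        = tensorSeminorm K (Ω[K⁄A]) L (kahlerSeminorm A K (vK ·)) (vL ·) x) ∧
    (∀ (y : Ω[L⁄A]) (ε : ℝ≥0), 0 < ε →
        ∃ x, kahlerSeminorm A L (vL ·) (y - ψ x) < ε) := by
  constructor
  · intro x
    exact le_antisymm (aux_le vK vL hext ψ hψ x) (aux_ge vK vL hext hdense ψ hψ x)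
  · intro y ε hε
    obtain ⟨n, c, b, hy⟩ := k_rep_exists (A := A) y
    have hchoose : ∀ i : Fin n, ∃ x : K, vL (b i - algebraMap K L x) < ε / (vL (c i) + 1) :=
      fun i => hdense (b i) _ (by positivity)
    choose x hx using hchoose
    refine ⟨∑ i, KaehlerDifferential.D A K (x i) ⊗ₜ[K] c i, ?_⟩
    have hdiff : y - ψ (∑ i, KaehlerDifferential.D A K (x i) ⊗ₜ[K] c i)
        = ∑ i, c i • KaehlerDifferential.D A L (b i - algebraMap K L (x i)) := by
      rw [map_sum, hy, ← Finset.sum_sub_distrib]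
      refine Finset.sum_congr rfl fun i _ => ?_
      rw [hψ]
      rw [show KaehlerDifferential.map A A K L (KaehlerDifferential.D A K (x i))
        = KaehlerDifferential.D A L (algebraMap K L (x i)) from KaehlerDifferential.map_D A A K L (x i)]
      rw [map_sub, smul_sub]
    rw [hdiff]
    refine (k_le_of_rep vL _ _ rfl).trans_lt ?_
    rw [Finset.sup_lt_iff (by simpa using hε)]
    intro i _
    calc vL (c i) * vL (b i - algebraMap K L (x i))
        ≤ (vL (c i) + 1) * vL (b i - algebraMap K L (x i)) :=
          mul_le_mul_left (self_le_add_right _ _) _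
      _ < (vL (c i) + 1) * (ε / (vL (c i) + 1)) :=
          mul_lt_mul_of_pos_left (hx i) (by positivity)
      _ = ε := by
          rw [mul_comm, div_mul_cancel₀]
          exact (by positivity : (0:ℝ≥0) < vL (c i) + 1).ne'
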